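/- Let F be a C³ distribution function with density f = F′ on intervals I_j = [a_{j−1}, a_j] and I_{j+1} = [a_j, a_{j+1}] with a_{j−1} < a_j < a_{j+1}, f′ continuous, f″ continuous. Define r_i = (1/2)(F(a_i)+F(a_{i−1}))(a_i − a_{i−1}) − ∫_{a_{i−1}}^{a_i} F(u) du and Δ_i a = a_i − a_{i−1} for i = j, j+1. Then there exists a_j* ∈ I_j such that r_j/(Δ_j a)³ − r_{j+1}/(Δ_{j+1} a)³ ≤ −(1/12) f″(a_j*) Δ_j a + (1/24)( (sup_{I_j} f″) Δ_j a − (inf_{I_{j+1}} f″) Δ_{j+1} a ). -/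

import Mathlib

open Set intervalIntegral

/-- If `q a = 0` and the derivative of `q` is nonpositive on `(a,b)`, then `q ≤ 0` on `[a,b]`. -/
lemma nonpos_aux {q q' : ℝ → ℝ} {a b : ℝ} (hab : a ≤ b)
    (hcont : ContinuousOn q (Set.Icc a b))
    (hderiv : ∀ t ∈ Set.Ioo a b, HasDerivAt q (q' t) t)
    (h0 : q a = 0)
    (hneg : ∀ t ∈ Set.Ioo a b, q' t ≤ 0) :
    ∀ t ∈ Set.Icc a b, q t ≤ 0 := by
  have hA : AntitoneOn q (Set.Icc a b) := by
    apply antitoneOn_of_hasDerivWithinAt_nonpos (f' := q') (convex_Icc a b) hcont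
    · rw [interior_Icc]; exact fun x hx => (hderiv x hx).hasDerivWithinAt
    · rw [interior_Icc]; exact hneg
  intro t ht
  calc q t ≤ q a := hA (Set.left_mem_Icc.2 hab) ht ht.1
  _ = 0 := h0

/-- One-sided trapezoid error bound. -/
lemma trap_upper (F f g : ℝ → ℝ) (a b C : ℝ) (hab : a < b)
    (hF : ∀ x ∈ Set.Icc a b, HasDerivAt F (f x) x)
    (hf : ∀ x ∈ Set.Icc a b, HasDerivAt f (g x) x)
    (hC : ∀ x ∈ Set.Icc a b, g x - g a ≤ C * (x - a)) :
    (1/2) * (F b + F a) * (b - a) - (∫ u in a..b, F u)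
      ≤ (1/12) * g a * (b - a)^3 + (C/24) * (b - a)^4 := by
  have FCont : ContinuousOn F (Set.Icc a b) :=
    fun t ht => (hF t ht).continuousAt.continuousWithinAt
  have fCont : ContinuousOn f (Set.Icc a b) :=
    fun t ht => (hf t ht).continuousAt.continuousWithinAt
  -- level 2: the derivative of the error function is nonpositive
  have hp : ∀ t ∈ Set.Icc a b, HasDerivAt
      (fun y => 1/2 * f y * (y - a) - 1/2 * F y - 1/4 * g a * (y - a)^2
        - C/6 * (y - a)^3 + 1/2 * F a)
      (1/2 * (t - a) * (g t - g a - C * (t - a))) t := by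
    intro t ht
    have H := (((((hf t ht).const_mul (1/2:ℝ)).mul ((hasDerivAt_id t).sub_const a)).sub
        ((hF t ht).const_mul (1/2:ℝ))).sub
        ((((hasDerivAt_id t).sub_const a).pow 2).const_mul (1/4 * g a))).sub
        ((((hasDerivAt_id t).sub_const a).pow 3).const_mul (C/6)) |>.add_const (1/2 * F a)
    refine H.congr_deriv ?_
    simp only [id_eq]
    push_cast
    ring
  have hple : ∀ t ∈ Set.Icc a b,
      (fun y => 1/2 * f y * (y - a) - 1/2 * F y - 1/4 * g a * (y - a)^2
        - C/6 * (y - a)^3 + 1/2 * F a) t ≤ 0 := by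
    apply nonpos_aux hab.le
    · exact fun t ht => (hp t ht).continuousAt.continuousWithinAt
    · exact fun t ht => hp t (Set.Ioo_subset_Icc_self ht)
    · simp
    · intro t ht
      have h1 := hC t (Set.Ioo_subset_Icc_self ht)
      nlinarith [ht.1.le, sub_nonneg.2 ht.1.le]
  -- level 1
  have hIntOn : MeasureTheory.IntegrableOn F (Set.Icc a b) := FCont.integrableOn_Icc
  have hint : ContinuousOn (fun x => ∫ u in a..x, F u) (Set.Icc a b) := by
    have := intervalIntegral.continuousOn_primitive_interval
      (a := a) (b := b) (μ := MeasureTheory.volume) (f := F) ?_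
    · rwa [Set.uIcc_of_le hab.le] at this
    · rwa [Set.uIcc_of_le hab.le]
  have hcont : ContinuousOn
      (fun t => 1/2 * (F t + F a) * (t - a) - (∫ u in a..t, F u)
        - 1/12 * g a * (t - a)^3 - C/24 * (t - a)^4) (Set.Icc a b) := by
    refine ContinuousOn.sub (ContinuousOn.sub (ContinuousOn.sub ?_ hint) ?_) ?_
    · exact (continuousOn_const.mul (FCont.add continuousOn_const)).mul
        (continuousOn_id.sub continuousOn_const)
    · exact Continuous.continuousOn (by continuity)
    · exact Continuous.continuousOn (by continuity)
  have hh : ∀ t ∈ Set.Ioo a b, HasDerivAt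
      (fun t => 1/2 * (F t + F a) * (t - a) - (∫ u in a..t, F u)
        - 1/12 * g a * (t - a)^3 - C/24 * (t - a)^4)
      (1/2 * f t * (t - a) - 1/2 * F t - 1/4 * g a * (t - a)^2
        - C/6 * (t - a)^3 + 1/2 * F a) t := by
    intro t ht
    have hmem : t ∈ Set.Icc a b := Set.Ioo_subset_Icc_self ht
    have hii : IntervalIntegrable F MeasureTheory.volume a t := by
      apply ContinuousOn.intervalIntegrable
      rw [Set.uIcc_of_le ht.1.le]
      exact FCont.mono (Set.Icc_subset_Icc le_rfl hmem.2)
    have hmeas : StronglyMeasurableAtFilter F (nhds t) MeasureTheory.volume :=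
      (FCont.mono Set.Ioo_subset_Icc_self).stronglyMeasurableAtFilter isOpen_Ioo t ht
    have hi : HasDerivAt (fun x => ∫ u in a..x, F u) (F t) t :=
      intervalIntegral.integral_hasDerivAt_right hii hmeas (hF t hmem).continuousAt
    have H := (((((hF t hmem).add_const (F a)).const_mul (1/2:ℝ)).mul
        ((hasDerivAt_id t).sub_const a)).sub hi).sub
        ((((hasDerivAt_id t).sub_const a).pow 3).const_mul (1/12 * g a)) |>.sub
        ((((hasDerivAt_id t).sub_const a).pow 4).const_mul (C/24))
    refine H.congr_deriv ?_
    simp only [id_eq]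
    push_cast
    ring
  have hfin := nonpos_aux hab.le hcont hh (by simp)
    (fun t ht => hple t (Set.Ioo_subset_Icc_self ht)) b (Set.right_mem_Icc.2 hab.le)
  linarith

/-- Lemma 4.5: comparison of normalized trapezoid errors on adjacent intervals. -/
theorem stmt_15 (F f f' f'' : ℝ → ℝ) (a₀ a₁ a₂ : ℝ) (h01 : a₀ < a₁) (h12 : a₁ < a₂)
    (hF : ∀ x ∈ Set.Icc a₀ a₂, HasDerivAt F (f x) x)
    (hf : ∀ x ∈ Set.Icc a₀ a₂, HasDerivAt f (f' x) x)
    (hf' : ∀ x ∈ Set.Icc a₀ a₂, HasDerivAt f' (f'' x) x)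
    (hf'' : ContinuousOn f'' (Set.Icc a₀ a₂))
    (rj rj1 Δj Δj1 : ℝ)
    (hrj : rj = (1 / 2) * (F a₁ + F a₀) * (a₁ - a₀) - ∫ u in a₀..a₁, F u)
    (hrj1 : rj1 = (1 / 2) * (F a₂ + F a₁) * (a₂ - a₁) - ∫ u in a₁..a₂, F u)
    (hΔj : Δj = a₁ - a₀) (hΔj1 : Δj1 = a₂ - a₁) :
    ∃ x ∈ Set.Icc a₀ a₁,
      rj / Δj ^ 3 - rj1 / Δj1 ^ 3
        ≤ -(1 / 12) * f'' x * Δj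
          + (1 / 24) * (sSup (f'' '' Set.Icc a₀ a₁) * Δj
              - sInf (f'' '' Set.Icc a₁ a₂) * Δj1) := by
  subst hrj hrj1 hΔj hΔj1
  have sub1 : Set.Icc a₀ a₁ ⊆ Set.Icc a₀ a₂ := Set.Icc_subset_Icc le_rfl h12.le
  have sub2 : Set.Icc a₁ a₂ ⊆ Set.Icc a₀ a₂ := Set.Icc_subset_Icc h01.le le_rfl
  set C := sSup (f'' '' Set.Icc a₀ a₁) with hCdef
  set c := sInf (f'' '' Set.Icc a₁ a₂) with hcdef
  have hCb : ∀ x ∈ Set.Icc a₀ a₁, f'' x ≤ C := fun x hx =>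
    le_csSup ((isCompact_Icc.image_of_continuousOn (hf''.mono sub1)).bddAbove) ⟨x, hx, rfl⟩
  have hcb : ∀ x ∈ Set.Icc a₁ a₂, c ≤ f'' x := fun x hx =>
    csInf_le ((isCompact_Icc.image_of_continuousOn (hf''.mono sub2)).bddBelow) ⟨x, hx, rfl⟩
  -- f' x - f' a₀ ≤ C (x - a₀) on [a₀, a₁]
  have hq1 : ∀ t ∈ Set.Icc a₀ a₁,
      HasDerivAt (fun y => f' y - f' a₀ - C * (y - a₀)) (f'' t - C * 1) t := fun t ht =>
    ((hf' t (sub1 ht)).sub_const (f' a₀)).sub (((hasDerivAt_id t).sub_const a₀).const_mul C)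
  have hC1' := nonpos_aux h01.le
    (fun t ht => (hq1 t ht).continuousAt.continuousWithinAt)
    (fun t ht => hq1 t (Set.Ioo_subset_Icc_self ht)) (by simp)
    (fun t ht => by have := hCb t (Set.Ioo_subset_Icc_self ht); linarith)
  have hC1 : ∀ x ∈ Set.Icc a₀ a₁, f' x - f' a₀ ≤ C * (x - a₀) := fun x hx => by
    have := hC1' x hx; linarith
  -- c (x - a₁) ≤ f' x - f' a₁ on [a₁, a₂]
  have hq2 : ∀ t ∈ Set.Icc a₁ a₂,
      HasDerivAt (fun y => c * (y - a₁) - (f' y - f' a₁)) (c * 1 - f'' t) t := fun t ht =>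
    (((hasDerivAt_id t).sub_const a₁).const_mul c).sub ((hf' t (sub2 ht)).sub_const (f' a₁))
  have hc1' := nonpos_aux h12.le
    (fun t ht => (hq2 t ht).continuousAt.continuousWithinAt)
    (fun t ht => hq2 t (Set.Ioo_subset_Icc_self ht)) (by simp)
    (fun t ht => by have := hcb t (Set.Ioo_subset_Icc_self ht); linarith)
  have hc1 : ∀ x ∈ Set.Icc a₁ a₂, c * (x - a₁) ≤ f' x - f' a₁ := fun x hx => by
    have := hc1' x hx; linarith
  -- upper bound for rj
  have upper := trap_upper F f f' a₀ a₁ C h01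
    (fun x hx => hF x (sub1 hx)) (fun x hx => hf x (sub1 hx)) hC1
  -- lower bound for rj1 via negation
  have lower := trap_upper (fun x => -F x) (fun x => -f x) (fun x => -f' x) a₁ a₂ (-c) h12
    (fun x hx => (hF x (sub2 hx)).neg) (fun x hx => (hf x (sub2 hx)).neg)
    (fun x hx => by
      have h := hc1 x hx
      have h2 : -c * (x - a₁) = -(c * (x - a₁)) := by ring
      linarith)
  rw [intervalIntegral.integral_neg] at lower
  -- Mean value theorem for f' on [a₀, a₁]
  obtain ⟨x, hx, hslope⟩ := exists_hasDerivAt_eq_slope f' f'' h01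
    (fun t ht => (hf' t (sub1 ht)).continuousAt.continuousWithinAt)
    (fun t ht => hf' t (sub1 (Set.Ioo_subset_Icc_self ht)))
  refine ⟨x, Set.Ioo_subset_Icc_self hx, ?_⟩
  have hΔpos : (0:ℝ) < a₁ - a₀ := by linarith
  have hΔ1pos : (0:ℝ) < a₂ - a₁ := by linarith
  have hs : f' a₁ - f' a₀ = f'' x * (a₁ - a₀) := by
    rw [hslope]; field_simp
  have e1 : ((1:ℝ)/2) * (F a₁ + F a₀) * (a₁ - a₀) - (∫ u in a₀..a₁, F u)
      ≤ (1/12 * f' a₀ + C/24 * (a₁ - a₀)) * (a₁ - a₀)^3 := by nlinarith [upper]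
  have e2 : (1/12 * f' a₁ + c/24 * (a₂ - a₁)) * (a₂ - a₁)^3
      ≤ ((1:ℝ)/2) * (F a₂ + F a₁) * (a₂ - a₁) - (∫ u in a₁..a₂, F u) := by nlinarith [lower]
  have d1 : ((1:ℝ)/2 * (F a₁ + F a₀) * (a₁ - a₀) - (∫ u in a₀..a₁, F u)) / (a₁ - a₀)^3
      ≤ 1/12 * f' a₀ + C/24 * (a₁ - a₀) :=
    (div_le_iff₀ (by positivity)).2 e1
  have d2 : 1/12 * f' a₁ + c/24 * (a₂ - a₁)
      ≤ ((1:ℝ)/2 * (F a₂ + F a₁) * (a₂ - a₁) - (∫ u in a₁..a₂, F u)) / (a₂ - a₁)^3 :=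
    (le_div_iff₀ (by positivity)).2 e2
  linarith [d1, d2, hs]
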